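/- arXiv:0810.3177 — 3 statements merged into one kernel-verified Lean document; each statement's English description precedes it below -/
import Mathlib

section
/- Let Σ11 be symmetric positive definite, s12 a vector, p12 a vector with nonnegative entries. A vector β minimizes F(β) = (1/4) βᵀ Σ11 β - s12ᵀ β + Σ_j (p12)_j |β_j| if and only if for each coordinate j, β_j = 2 S((s12)_j - (1/2) Σ_{k≠j} (Σ11)_{jk} β_k ; (p12)_j) / (Σ11)_{jj}, where S(x; ρ) = sgn(x)(|x| - ρ)_+ is the soft-thresholding operator. -/
/-- Soft-thresholding operator `S(x; ρ) = sgn(x)(|x| - ρ)₊`. -/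
noncomputable def softThreshold (x ρ : ℝ) : ℝ := Real.sign x * max (|x| - ρ) 0

open Matrix

lemma no_neg_slope {a P δ : ℝ} (ha : 0 < a) (hδ : 0 < δ) (hP : 0 < P)
    (h : ∀ ε : ℝ, 0 < ε → ε ≤ δ → 0 ≤ (1/4)*a*ε^2 - P*ε) : False := by
  set ε := min δ (2*P/a) with hε
  have hεpos : 0 < ε := lt_min hδ (by positivity)
  have h1 : a * ε ≤ 2*P := by
    have h2 : ε ≤ 2*P/a := min_le_right _ _
    calc a * ε ≤ a * (2*P/a) := mul_le_mul_of_nonneg_left h2 (le_of_lt ha)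
      _ = 2*P := by field_simp
  have h3 := h ε hεpos (min_le_left _ _)
  nlinarith [mul_le_mul_of_nonneg_right h1 (le_of_lt hεpos), mul_pos hP hεpos]

lemma coeff_zero {a E δ : ℝ} (ha : 0 < a) (hδ : 0 < δ)
    (h : ∀ ε : ℝ, |ε| ≤ δ → 0 ≤ (1/4)*a*ε^2 + E*ε) : E = 0 := by
  by_contra hE
  have hEabs : 0 < |E| := abs_pos.mpr hE
  refine no_neg_slope ha hδ hEabs (fun ε hε1 hε2 => ?_)
  rcases lt_or_gt_of_ne hE with hEneg | hEpos
  · have h4 := h ε (by rw [abs_of_pos hε1]; exact hε2)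
    have : |E| = -E := abs_of_neg hEneg
    nlinarith
  · have h4 := h (-ε) (by rw [abs_neg, abs_of_pos hε1]; exact hε2)
    have : |E| = E := abs_of_pos hEpos
    nlinarith

/-- 1-d subgradient extraction from coordinatewise minimality. -/
lemma one_dim {a ρ D b : ℝ} (ha : 0 < a) (hρ : 0 ≤ ρ)
    (h : ∀ t : ℝ, 0 ≤ (1/4)*a*(t-b)^2 + D*(t-b) + ρ*(|t| - |b|)) :
    ∃ t0 : ℝ, |t0| ≤ 1 ∧ t0 * b = |b| ∧ D + ρ * t0 = 0 := by
  rcases eq_or_ne b 0 with hb | hb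
  · subst hb
    have habs : |D| ≤ ρ := by
      by_contra hc
      push_neg at hc
      have hD0 : 0 < |D| := lt_of_le_of_lt hρ hc
      have hDne : D ≠ 0 := abs_pos.mp hD0
      refine no_neg_slope ha one_pos (sub_pos.mpr hc) (fun ε hε1 _ => ?_)
      rcases lt_or_gt_of_ne hDne with hDneg | hDpos
      · have h2 := h ε
        simp only [sub_zero, abs_zero] at h2
        rw [abs_of_pos hε1] at h2
        have : |D| = -D := abs_of_neg hDneg
        nlinarith
      · have h2 := h (-ε)
        simp only [sub_zero, abs_zero] at h2
        rw [abs_neg, abs_of_pos hε1] at h2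
        have : |D| = D := abs_of_pos hDpos
        nlinarith
    refine ⟨if hρ0 : ρ = 0 then 0 else -D/ρ, ?_, by simp, ?_⟩
    · split_ifs with hρ0
      · simp
      · have hρpos : 0 < ρ := lt_of_le_of_ne hρ (Ne.symm hρ0)
        rw [abs_div, abs_neg, abs_of_pos hρpos, div_le_one hρpos]
        exact habs
    · split_ifs with hρ0
      · subst hρ0
        have h1 : |D| ≤ 0 := by simpa using habs
        have h2 : D = 0 := abs_nonpos_iff.mp h1
        simp [h2]
      · have h1 : ρ * (-D/ρ) = -D := by field_simp
        rw [h1]; ring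
  · have hb0 : 0 < |b| := abs_pos.mpr hb
    refine ⟨b/|b|, ?_, ?_, ?_⟩
    · rw [abs_div, abs_abs, div_self (ne_of_gt hb0)]
    · rw [div_mul_eq_mul_div, ← abs_mul_abs_self b, mul_div_assoc,
        div_self (ne_of_gt hb0), mul_one]
    · refine coeff_zero ha (half_pos hb0) (fun ε hε => ?_)
      have h2 := h (b + ε)
      have habsval : |b + ε| - |b| = (b/|b|) * ε := by
        rcases lt_or_gt_of_ne hb with hbneg | hbpos
        · have h3 : b + ε < 0 := by
            have h4 := (abs_le.mp hε).2
            rw [abs_of_neg hbneg] at h4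
            linarith
          rw [abs_of_neg h3, abs_of_neg hbneg]
          field_simp
          ring
        · have h3 : 0 < b + ε := by
            have h4 := (abs_le.mp hε).1
            rw [abs_of_pos hbpos] at h4
            linarith
          rw [abs_of_pos h3, abs_of_pos hbpos]
          field_simp
          ring
      rw [habsval] at h2
      calc (0:ℝ) ≤ (1/4)*a*(b + ε - b)^2 + D*(b + ε - b) + ρ*((b/|b|)*ε) := h2
        _ = (1/4)*a*ε^2 + (D + ρ*(b/|b|))*ε := by ring

/-- The subgradient condition is equivalent to the soft-thresholding equation. -/
lemma subgrad_iff_eq {a ρ b c : ℝ} (ha : 0 < a) (hρ : 0 ≤ ρ) :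
    (∃ t0 : ℝ, |t0| ≤ 1 ∧ t0 * b = |b| ∧ (1/2)*a*b - c + ρ * t0 = 0)
    ↔ b = 2 * softThreshold c ρ / a := by
  have hane : a ≠ 0 := ne_of_gt ha
  constructor
  · rintro ⟨t0, ht1, htb, heq⟩
    rcases lt_trichotomy b 0 with hb | hb | hb
    · have ht0 : t0 = -1 := by
        have h1 : t0 * b = (-1) * b := by rw [htb, abs_of_neg hb]; ring
        exact mul_right_cancel₀ (ne_of_lt hb) h1
      subst ht0
      have hc : c < -ρ := by nlinarith
      have hcneg : c < 0 := lt_of_lt_of_le hc (by linarith)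
      unfold softThreshold
      rw [Real.sign_of_neg hcneg, abs_of_neg hcneg, max_eq_left (by linarith)]
      field_simp
      linarith
    · subst hb
      have hcρ : c = ρ * t0 := by linarith
      have habs : |c| ≤ ρ := by
        rw [hcρ, abs_mul, abs_of_nonneg hρ]
        calc ρ * |t0| ≤ ρ * 1 := mul_le_mul_of_nonneg_left ht1 hρ
          _ = ρ := mul_one ρ
      unfold softThreshold
      rw [max_eq_right (by linarith)]
      simp
    · have ht0 : t0 = 1 := by
        have h1 : t0 * b = 1 * b := by rw [htb, abs_of_pos hb]; ring
        exact mul_right_cancel₀ (ne_of_gt hb) h1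
      subst ht0
      have hc : ρ < c := by nlinarith
      have hcpos : 0 < c := lt_of_le_of_lt hρ hc
      unfold softThreshold
      rw [Real.sign_of_pos hcpos, abs_of_pos hcpos, max_eq_left (by linarith)]
      field_simp
      linarith
  · intro heq
    rcases lt_or_ge c (-ρ) with hclt | hc
    · have hcneg : c < 0 := lt_of_lt_of_le hclt (by linarith)
      have hS : softThreshold c ρ = c + ρ := by
        unfold softThreshold
        rw [Real.sign_of_neg hcneg, abs_of_neg hcneg, max_eq_left (by linarith)]
        ring
      rw [hS] at heq
      have hbneg : b < 0 := by
        rw [heq]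
        apply div_neg_of_neg_of_pos _ ha
        linarith
      refine ⟨-1, by norm_num, by rw [abs_of_neg hbneg]; ring, ?_⟩
      rw [heq]; field_simp; ring
    · rcases le_or_gt c ρ with hc2 | hc2
      · -- |c| ≤ ρ
        have habsc : |c| ≤ ρ := abs_le.mpr ⟨hc, hc2⟩
        have hS : softThreshold c ρ = 0 := by
          unfold softThreshold
          rw [max_eq_right (by linarith)]
          ring
        rw [hS] at heq
        simp only [mul_zero, zero_div] at heq
        refine ⟨if hρ0 : ρ = 0 then 0 else c/ρ, ?_, by simp [heq], ?_⟩
        · split_ifs with hρ0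
          · simp
          · have hρpos : 0 < ρ := lt_of_le_of_ne hρ (Ne.symm hρ0)
            rw [abs_div, abs_of_pos hρpos, div_le_one hρpos]
            exact habsc
        · split_ifs with hρ0
          · subst hρ0
            have : c = 0 := abs_nonpos_iff.mp habsc
            simp [heq, this]
          · have h1 : ρ * (c/ρ) = c := by field_simp
            rw [heq, h1]; ring
      · have hcpos : 0 < c := lt_of_le_of_lt hρ hc2
        have hS : softThreshold c ρ = c - ρ := by
          unfold softThreshold
          rw [Real.sign_of_pos hcpos, abs_of_pos hcpos, max_eq_left (by linarith)]
          ring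
        rw [hS] at heq
        have hbpos : 0 < b := by
          rw [heq]
          apply div_pos _ ha
          linarith
        refine ⟨1, by norm_num, by rw [abs_of_pos hbpos]; ring, ?_⟩
        rw [heq]; field_simp; ring

/-- Quadratic expansion of the objective difference. -/
lemma lasso_expand {m : ℕ} (Q : Matrix (Fin m) (Fin m) ℝ)
    (hsym2 : ∀ x y : Fin m → ℝ, x ⬝ᵥ Q.mulVec y = y ⬝ᵥ Q.mulVec x)
    (s ρ β β' : Fin m → ℝ) :
    ((1/4) * (β' ⬝ᵥ Q.mulVec β') - s ⬝ᵥ β' + ∑ j, ρ j * |β' j|)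
      - ((1/4) * (β ⬝ᵥ Q.mulVec β) - s ⬝ᵥ β + ∑ j, ρ j * |β j|)
    = (1/4) * ((β' - β) ⬝ᵥ Q.mulVec (β' - β))
      + ∑ j, (((1/2) * (Q.mulVec β) j - s j) * (β' j - β j)
          + ρ j * (|β' j| - |β j|)) := by
  have e1 : (β' - β) ⬝ᵥ Q.mulVec (β' - β)
      = β' ⬝ᵥ Q.mulVec β' - 2*(β ⬝ᵥ Q.mulVec β') + β ⬝ᵥ Q.mulVec β := by
    rw [Q.mulVec_sub, dotProduct_sub, sub_dotProduct, sub_dotProduct,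
      hsym2 β' β]
    ring
  have e4 : ∑ j, (((1/2) * (Q.mulVec β) j - s j) * (β' j - β j)
        + ρ j * (|β' j| - |β j|))
      = ((1/2) * (Q.mulVec β ⬝ᵥ (β' - β)) - s ⬝ᵥ (β' - β))
        + (∑ j, ρ j * |β' j| - ∑ j, ρ j * |β j|) := by
    simp only [dotProduct, Pi.sub_apply, Finset.mul_sum, ← Finset.sum_sub_distrib,
      ← Finset.sum_add_distrib]
    exact Finset.sum_congr rfl fun j _ => by ring
  have e2 : Q.mulVec β ⬝ᵥ (β' - β) = β ⬝ᵥ Q.mulVec β' - β ⬝ᵥ Q.mulVec β := by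
    rw [dotProduct_comm, sub_dotProduct, hsym2 β' β]
  have e3 : s ⬝ᵥ (β' - β) = s ⬝ᵥ β' - s ⬝ᵥ β := dotProduct_sub s β' β
  rw [e4, e1, e2, e3]
  ring

/-- Coordinatewise characterization of the weighted-Lasso minimizer: `β` minimizes
`F(β) = (1/4) βᵀ Σ11 β - s12ᵀ β + ∑ⱼ (p12)ⱼ |βⱼ|` iff each coordinate satisfies the
soft-thresholding fixed-point equation. -/
theorem lasso_coordinatewise_characterization {m : ℕ}
    (Sig11 : Matrix (Fin m) (Fin m) ℝ) (hSig11 : Sig11.PosDef)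
    (s12 p12 : Fin m → ℝ) (hp12 : ∀ j, 0 ≤ p12 j)
    (β : Fin m → ℝ) :
    (∀ β' : Fin m → ℝ,
      (1/4) * (β ⬝ᵥ Sig11.mulVec β) - s12 ⬝ᵥ β + ∑ j, p12 j * |β j|
        ≤ (1/4) * (β' ⬝ᵥ Sig11.mulVec β') - s12 ⬝ᵥ β' + ∑ j, p12 j * |β' j|)
    ↔ ∀ j, β j = 2 * softThreshold
        (s12 j - (1/2) * ∑ k ∈ Finset.univ.erase j, Sig11 j k * β k) (p12 j)
        / Sig11 j j := by
  have hsymm : ∀ i j, Sig11 i j = Sig11 j i := by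
    intro i j
    have h1 := hSig11.1.apply i j
    simpa using h1.symm
  have hsym2 : ∀ x y : Fin m → ℝ, x ⬝ᵥ Sig11.mulVec y = y ⬝ᵥ Sig11.mulVec x := by
    intro x y
    simp only [dotProduct, mulVec, Finset.mul_sum]
    rw [Finset.sum_comm]
    refine Finset.sum_congr rfl fun i _ => Finset.sum_congr rfl fun j _ => ?_
    rw [hsymm j i]; ring
  have hdiag : ∀ j, 0 < Sig11 j j := by
    intro j
    have h1 := hSig11.dotProduct_mulVec_pos (x := Pi.single j 1) (by
      intro hcon
      have := congrFun hcon j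
      simp at this)
    simpa using h1
  have hD : ∀ j, (1/2) * (Sig11.mulVec β) j - s12 j
      = (1/2) * (Sig11 j j) * β j
        - (s12 j - (1/2) * ∑ k ∈ Finset.univ.erase j, Sig11 j k * β k) := by
    intro j
    have h1 : (Sig11.mulVec β) j
        = Sig11 j j * β j + ∑ k ∈ Finset.univ.erase j, Sig11 j k * β k := by
      simp only [mulVec, dotProduct]
      exact (Finset.add_sum_erase Finset.univ (fun k => Sig11 j k * β k)
        (Finset.mem_univ j)).symm
    rw [h1]; ring
  constructor
  · intro hmin j
    set c := s12 j - (1/2) * ∑ k ∈ Finset.univ.erase j, Sig11 j k * β k with hc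
    have h1 : ∀ t : ℝ, 0 ≤ (1/4)*(Sig11 j j)*(t - β j)^2
        + ((1/2)*(Sig11 j j)*(β j) - c)*(t - β j) + (p12 j)*(|t| - |β j|) := by
      intro t
      have h2 := hmin (Function.update β j t)
      have h3 := lasso_expand Sig11 hsym2 s12 p12 β (Function.update β j t)
      have hd : Function.update β j t - β = Pi.single j (t - β j) := by
        funext k
        by_cases hk : k = j
        · subst hk; simp
        · simp [Function.update_of_ne hk, Pi.single_apply, hk]
      have hquad : (Function.update β j t - β) ⬝ᵥ
            Sig11.mulVec (Function.update β j t - β)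
          = (t - β j) * (Sig11 j j * (t - β j)) := by
        rw [hd, mulVec_single, single_dotProduct]; simp
      have hsum : ∑ k, (((1/2) * (Sig11.mulVec β) k - s12 k)
            * (Function.update β j t k - β k)
            + p12 k * (|Function.update β j t k| - |β k|))
          = ((1/2) * (Sig11.mulVec β) j - s12 j) * (t - β j)
            + p12 j * (|t| - |β j|) := by
        rw [Finset.sum_eq_single j]
        · simp
        · intro k _ hk
          simp [Function.update_of_ne hk]
        · simp
      have key : 0 ≤ (1/4) * ((t - β j) * (Sig11 j j * (t - β j)))
          + (((1/2) * (Sig11.mulVec β) j - s12 j) * (t - β j)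
            + p12 j * (|t| - |β j|)) := by
        rw [← hquad, ← hsum]
        linarith [h3]
      rw [hD j, ← hc] at key
      nlinarith [key]
    obtain ⟨t0, ht1, htb, heq⟩ := one_dim (hdiag j) (hp12 j) h1
    exact (subgrad_iff_eq (hdiag j) (hp12 j)).mp ⟨t0, ht1, htb, heq⟩
  · intro heq β'
    have hsub : ∀ j, ∃ t0 : ℝ, |t0| ≤ 1 ∧ t0 * β j = |β j|
        ∧ (1/2)*(Sig11 j j)*(β j)
          - (s12 j - (1/2) * ∑ k ∈ Finset.univ.erase j, Sig11 j k * β k)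
          + p12 j * t0 = 0 :=
      fun j => (subgrad_iff_eq (hdiag j) (hp12 j)).mpr (heq j)
    choose t0 ht1 htb hteq using hsub
    have h3 := lasso_expand Sig11 hsym2 s12 p12 β β'
    have hterm : ∀ j, 0 ≤ ((1/2) * (Sig11.mulVec β) j - s12 j) * (β' j - β j)
        + p12 j * (|β' j| - |β j|) := by
      intro j
      have hDneg : (1/2) * (Sig11.mulVec β) j - s12 j = -(p12 j * t0 j) := by
        rw [hD j]
        linarith [hteq j]
      rw [hDneg]
      have h6 : t0 j * β' j ≤ |β' j| := by
        have h7 : t0 j * β' j ≤ |t0 j * β' j| := le_abs_self _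
        rw [abs_mul] at h7
        nlinarith [abs_nonneg (β' j), ht1 j]
      have h8 : p12 j * (t0 j * β j) = p12 j * |β j| := by rw [htb j]
      nlinarith [mul_nonneg (hp12 j) (sub_nonneg.mpr h6), h8]
    have hquad : 0 ≤ (β' - β) ⬝ᵥ Sig11.mulVec (β' - β) := by
      have h9 := hSig11.posSemidef.dotProduct_mulVec_nonneg (β' - β)
      simpa using h9
    have hsum : 0 ≤ ∑ j, (((1/2) * (Sig11.mulVec β) j - s12 j) * (β' j - β j)
        + p12 j * (|β' j| - |β j|)) := Finset.sum_nonneg fun j _ => hterm j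
    linarith [h3]
end

section
/- Let g : Θ_ε → R^{pQ} be the fixed-point map of the variational E-step for the affiliation model with two penalty values, and suppose the quantities L_{ij} = |K_{ij}|/λ + log(2λ) satisfy 0 < L_{ij} < ε/(2(p-1)(1+ε)) for both λ ∈ {λ_in, λ_out} and all i ≠ j. Then d(g(a), g(b)) ≤ c · d(a, b) for all a, b ∈ Θ_ε, with contraction constant c = (1 + ε⁻¹)·2(p-1)·max_{i≠j} L_{ij}^max < 1, where d(a,b) = max_i max_{q,ℓ} log(a_{iq} b_{iℓ} / (b_{iq} a_{iℓ})). -/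
/-- The row-wise Hilbert-type distance
`d(a,b) = max_i max_{q,ℓ} log (a_{iq} b_{iℓ} / (b_{iq} a_{iℓ}))`. -/
noncomputable def dHilbert {p Q : ℕ} (a b : Fin p → Fin Q → ℝ) : ℝ :=
  ⨆ i, ⨆ q, ⨆ l, Real.log (a i q * b i l / (b i q * a i l))

/-- The set `Θ_ε` of `p × Q` row-stochastic matrices with all entries in `[ε, 1-ε]`. -/
def ThetaEps (p Q : ℕ) (ε : ℝ) : Set (Fin p → Fin Q → ℝ) :=
  {a | (∀ i q, a i q ∈ Set.Icc ε (1 - ε)) ∧ ∀ i, ∑ q, a i q = 1}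

/-- Penalty value `L = |K i j| / λ + log (2λ)` of the affiliation model. -/
noncomputable def Lval {p : ℕ} (K : Matrix (Fin p) (Fin p) ℝ) (lam : ℝ) (i j : Fin p) : ℝ :=
  |K i j| / lam + Real.log (2 * lam)

/-- Unnormalized variational E-step quantity
`u_{iq}(a) = α_q exp (-∑_{j≠i} ∑_ℓ a_{jℓ} L_{ijqℓ})` for the affiliation model, where
`L_{ijqℓ} = L^in_{ij}` if `q = ℓ` and `L^out_{ij}` otherwise. -/
noncomputable def uE {p Q : ℕ} (K : Matrix (Fin p) (Fin p) ℝ) (α : Fin Q → ℝ)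
    (lamIn lamOut : ℝ) (a : Fin p → Fin Q → ℝ) (i : Fin p) (q : Fin Q) : ℝ :=
  α q * Real.exp (-(∑ j ∈ Finset.univ.erase i, ∑ l,
    a j l * (if q = l then Lval K lamIn i j else Lval K lamOut i j)))

/-- The fixed-point map `g_{iq}(a) = u_{iq}(a) / ∑_ℓ u_{iℓ}(a)` of the variational
E-step for the affiliation model. -/
noncomputable def gE {p Q : ℕ} (K : Matrix (Fin p) (Fin p) ℝ) (α : Fin Q → ℝ)
    (lamIn lamOut : ℝ) (a : Fin p → Fin Q → ℝ) (i : Fin p) (q : Fin Q) : ℝ :=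
  uE K α lamIn lamOut a i q / ∑ l, uE K α lamIn lamOut a i l

lemma log_le_dHilbert {p Q : ℕ} (a b : Fin p → Fin Q → ℝ) (i : Fin p) (q l : Fin Q) :
    Real.log (a i q * b i l / (b i q * a i l)) ≤ dHilbert a b := by
  have h1 : Real.log (a i q * b i l / (b i q * a i l)) ≤
      ⨆ l, Real.log (a i q * b i l / (b i q * a i l)) :=
    le_ciSup (f := fun l => Real.log (a i q * b i l / (b i q * a i l)))
      (Set.finite_range _).bddAbove l
  have h2 : (⨆ l, Real.log (a i q * b i l / (b i q * a i l))) ≤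
      ⨆ q, ⨆ l, Real.log (a i q * b i l / (b i q * a i l)) :=
    le_ciSup (f := fun q => ⨆ l, Real.log (a i q * b i l / (b i q * a i l)))
      (Set.finite_range _).bddAbove q
  have h3 : (⨆ q, ⨆ l, Real.log (a i q * b i l / (b i q * a i l))) ≤ dHilbert a b :=
    le_ciSup (f := fun i => ⨆ q, ⨆ l, Real.log (a i q * b i l / (b i q * a i l)))
      (Set.finite_range _).bddAbove i
  linarith

lemma dHilbert_le {p Q : ℕ} [Nonempty (Fin p)] [Nonempty (Fin Q)]
    (a b : Fin p → Fin Q → ℝ) {c : ℝ}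
    (h : ∀ i q l, Real.log (a i q * b i l / (b i q * a i l)) ≤ c) :
    dHilbert a b ≤ c :=
  ciSup_le fun i => ciSup_le fun q => ciSup_le fun l => h i q l

lemma dHilbert_nonneg {p Q : ℕ} [Nonempty (Fin p)] [Nonempty (Fin Q)]
    (a b : Fin p → Fin Q → ℝ) (hab : ∀ i q, 0 < a i q ∧ 0 < b i q) :
    0 ≤ dHilbert a b := by
  obtain ⟨i⟩ := ‹Nonempty (Fin p)›
  obtain ⟨q⟩ := ‹Nonempty (Fin Q)›
  have h1 := (hab i q).1
  have h2 := (hab i q).2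
  have := log_le_dHilbert a b i q q
  rw [mul_comm (b i q), div_self (by positivity : a i q * b i q ≠ 0)] at this
  simpa using this

/-- one-sided bound against any `d` dominating all cross-ratio logs of row `j` -/
lemma sub_le_of_log_le {Q : ℕ} [Nonempty (Fin Q)]
    (a b : Fin Q → ℝ)
    (ha : ∀ q, 0 < a q) (ha1 : ∀ q, a q ≤ 1) (hb : ∀ q, 0 < b q)
    (hsum : ∑ q, a q = ∑ q, b q) {d : ℝ} (hd : 0 ≤ d)
    (hlog : ∀ q l, Real.log (a q * b l / (b q * a l)) ≤ d) (q : Fin Q) :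
    a q - b q ≤ d := by
  rcases le_or_gt (a q) (b q) with h | h
  · linarith
  · have hex : ∃ l, a l ≤ b l := by
      by_contra hc
      push_neg at hc
      have : ∑ l, b l < ∑ l, a l :=
        Finset.sum_lt_sum_of_nonempty Finset.univ_nonempty (fun l _ => hc l)
      linarith
    obtain ⟨l, hl⟩ := hex
    have haq := ha q
    have hbq := hb q
    have hal := ha l
    have hbl := hb l
    have h1 : a q - b q ≤ Real.log (a q / b q) := by
      have hlog2 : Real.log (b q / a q) ≤ b q / a q - 1 :=
        Real.log_le_sub_one_of_pos (by positivity)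
      have heq : Real.log (a q / b q) = -Real.log (b q / a q) := by
        rw [Real.log_div haq.ne' hbq.ne', Real.log_div hbq.ne' haq.ne']; ring
      rw [heq]
      have e : -(b q / a q - 1) = (a q - b q) / a q := by field_simp; ring
      have key : (a q - b q) ≤ (a q - b q) / a q := by
        rw [le_div_iff₀ haq]
        nlinarith [ha1 q]
      linarith
    have h2 : Real.log (a q / b q) ≤ Real.log (a q * b l / (b q * a l)) := by
      apply Real.log_le_log (by positivity)
      rw [div_le_div_iff₀ hbq (by positivity)]
      nlinarith [mul_le_mul_of_nonneg_left hl (mul_pos haq hbq).le]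
    have h3 := hlog q l
    linarith


noncomputable def AE {p Q : ℕ} (K : Matrix (Fin p) (Fin p) ℝ) (lamIn lamOut : ℝ)
    (x : Fin p → Fin Q → ℝ) (i : Fin p) (q : Fin Q) : ℝ :=
  ∑ j ∈ Finset.univ.erase i, ∑ m,
    x j m * (if q = m then Lval K lamIn i j else Lval K lamOut i j)

lemma uE_eq {p Q : ℕ} (K : Matrix (Fin p) (Fin p) ℝ) (α : Fin Q → ℝ)
    (lamIn lamOut : ℝ) (x : Fin p → Fin Q → ℝ) (i : Fin p) (q : Fin Q) :
    uE K α lamIn lamOut x i q = α q * Real.exp (-(AE K lamIn lamOut x i q)) := rfl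

/-- Contraction property of the variational E-step fixed-point map for the affiliation
model: if `0 < L_{ij} < ε / (2(p-1)(1+ε))` for both `λ ∈ {λ_in, λ_out}` and all `i ≠ j`,
then `d(g(a), g(b)) ≤ c · d(a, b)` on `Θ_ε`, with contraction constant
`c = (1 + ε⁻¹) · 2(p-1) · max_{i≠j} L^max_{ij} < 1`. -/
theorem variational_fixed_point_contraction {p Q : ℕ} (hp : 2 ≤ p) (hQ : 0 < Q)
    (ε : ℝ) (hε : 0 < ε) (hε' : ε < 1 / 2)
    (K : Matrix (Fin p) (Fin p) ℝ)
    (α : Fin Q → ℝ) (hα : ∀ q, 0 < α q)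
    (lamIn lamOut : ℝ) (hlamIn : 0 < lamIn) (hlamOut : 0 < lamOut)
    (hbound : ∀ i j, i ≠ j →
      (0 < Lval K lamIn i j ∧ Lval K lamIn i j < ε / (2 * ((p : ℝ) - 1) * (1 + ε))) ∧
      (0 < Lval K lamOut i j ∧ Lval K lamOut i j < ε / (2 * ((p : ℝ) - 1) * (1 + ε))))
    (M : ℝ)
    (hM : IsGreatest {x : ℝ | ∃ i j, i ≠ j ∧ x = max (Lval K lamIn i j) (Lval K lamOut i j)} M) :
    (1 + ε⁻¹) * (2 * ((p : ℝ) - 1)) * M < 1 ∧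
    ∀ a ∈ ThetaEps p Q ε, ∀ b ∈ ThetaEps p Q ε,
      dHilbert (gE K α lamIn lamOut a) (gE K α lamIn lamOut b)
        ≤ (1 + ε⁻¹) * (2 * ((p : ℝ) - 1)) * M * dHilbert a b := by
  haveI : Nonempty (Fin p) := Fin.pos_iff_nonempty.mp (by omega)
  haveI : Nonempty (Fin Q) := Fin.pos_iff_nonempty.mp hQ
  have hp1 : (1:ℝ) ≤ (p:ℝ) - 1 := by
    have : (2:ℝ) ≤ (p:ℝ) := by exact_mod_cast hp
    linarith
  obtain ⟨⟨i0, j0, hij0, hM0⟩, hMub⟩ := hM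
  have hMpos : 0 < M := by
    rw [hM0]; exact lt_max_of_lt_left ((hbound i0 j0 hij0).1.1)
  have hMlt : M < ε / (2 * ((p:ℝ)-1) * (1+ε)) := by
    rw [hM0]
    exact max_lt ((hbound i0 j0 hij0).1.2) ((hbound i0 j0 hij0).2.2)
  have hεinv : 0 < ε⁻¹ := inv_pos.mpr hε
  have hc1 : (1 + ε⁻¹) * (2 * ((p : ℝ) - 1)) * M < 1 := by
    have hcpos : 0 < (1 + ε⁻¹) * (2 * ((p:ℝ)-1)) := by positivity
    have h2 := mul_lt_mul_of_pos_left hMlt hcpos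
    have hεne : ε ≠ 0 := hε.ne'
    have hpne : (p:ℝ) - 1 ≠ 0 := by linarith
    have h1e : (1:ℝ) + ε ≠ 0 := by positivity
    have heq1 : (1 + ε⁻¹) * (2 * ((p:ℝ)-1)) * (ε / (2 * ((p:ℝ)-1) * (1+ε))) = 1 := by
      field_simp
      ring
    linarith
  refine ⟨hc1, ?_⟩
  rintro a ⟨haIcc, hasum⟩ b ⟨hbIcc, hbsum⟩
  set d := dHilbert a b with hdd
  have hapos : ∀ i q, 0 < a i q := fun i q => lt_of_lt_of_le hε (haIcc i q).1
  have hbpos : ∀ i q, 0 < b i q := fun i q => lt_of_lt_of_le hε (hbIcc i q).1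
  have ha1 : ∀ i q, a i q ≤ 1 := fun i q => le_trans (haIcc i q).2 (by linarith)
  have hb1 : ∀ i q, b i q ≤ 1 := fun i q => le_trans (hbIcc i q).2 (by linarith)
  have hd0 : 0 ≤ d := dHilbert_nonneg a b (fun i q => ⟨hapos i q, hbpos i q⟩)
  have habs : ∀ j q, |a j q - b j q| ≤ d := by
    intro j q
    rw [abs_sub_le_iff]
    refine ⟨sub_le_of_log_le (a j) (b j) (hapos j) (ha1 j) (hbpos j)
      (by rw [hasum j, hbsum j]) hd0 (fun q l => log_le_dHilbert a b j q l) q,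
      sub_le_of_log_le (b j) (a j) (hbpos j) (hb1 j) (hapos j)
      (by rw [hasum j, hbsum j]) hd0 (fun q l => ?_) q⟩
    have h := log_le_dHilbert a b j l q
    rw [show a j l * b j q / (b j l * a j q) = b j q * a j l / (a j q * b j l) by ring] at h
    exact h
  have hupos : ∀ (x : Fin p → Fin Q → ℝ) i q, 0 < uE K α lamIn lamOut x i q :=
    fun x i q => mul_pos (hα q) (Real.exp_pos _)
  have hSpos : ∀ (x : Fin p → Fin Q → ℝ) i, 0 < ∑ l, uE K α lamIn lamOut x i l :=
    fun x i => Finset.sum_pos (fun l _ => hupos x i l) Finset.univ_nonempty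
  have hgpos : ∀ (x : Fin p → Fin Q → ℝ) i q, 0 < gE K α lamIn lamOut x i q :=
    fun x i q => div_pos (hupos x i q) (hSpos x i)
  have hlogg : ∀ (x : Fin p → Fin Q → ℝ) i q,
      Real.log (gE K α lamIn lamOut x i q) =
        Real.log (α q) - AE K lamIn lamOut x i q
          - Real.log (∑ l, uE K α lamIn lamOut x i l) := by
    intro x i q
    rw [gE, Real.log_div (hupos x i q).ne' (hSpos x i).ne', uE_eq,
      Real.log_mul (hα q).ne' (Real.exp_pos _).ne', Real.log_exp]
    ring
  have hrhs0 : 0 ≤ (1 + ε⁻¹) * (2 * ((p:ℝ)-1)) * M * d :=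
    mul_nonneg (mul_nonneg (by positivity) hMpos.le) hd0
  apply dHilbert_le
  intro i q l
  have key : Real.log (gE K α lamIn lamOut a i q * gE K α lamIn lamOut b i l /
      (gE K α lamIn lamOut b i q * gE K α lamIn lamOut a i l)) =
      (AE K lamIn lamOut b i q - AE K lamIn lamOut a i q)
        - (AE K lamIn lamOut b i l - AE K lamIn lamOut a i l) := by
    rw [Real.log_div (mul_pos (hgpos a i q) (hgpos b i l)).ne'
        (mul_pos (hgpos b i q) (hgpos a i l)).ne',
      Real.log_mul (hgpos a i q).ne' (hgpos b i l).ne',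
      Real.log_mul (hgpos b i q).ne' (hgpos a i l).ne',
      hlogg, hlogg, hlogg, hlogg]
    ring
  rcases eq_or_ne q l with rfl | hql
  · rw [show gE K α lamIn lamOut a i q * gE K α lamIn lamOut b i q /
        (gE K α lamIn lamOut b i q * gE K α lamIn lamOut a i q) = 1 by
        rw [mul_comm (gE K α lamIn lamOut b i q)]
        exact div_self (mul_pos (hgpos a i q) (hgpos b i q)).ne',
      Real.log_one]
    exact hrhs0
  · -- q ≠ l
    have hAdiff : ∀ (x : Fin p → Fin Q → ℝ),
        AE K lamIn lamOut x i q - AE K lamIn lamOut x i l =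
        ∑ j ∈ Finset.univ.erase i,
          (x j q - x j l) * (Lval K lamIn i j - Lval K lamOut i j) := by
      intro x
      rw [AE, AE, ← Finset.sum_sub_distrib]
      refine Finset.sum_congr rfl fun j hj => ?_
      rw [← Finset.sum_sub_distrib]
      have hterm : ∀ m, x j m * (if q = m then Lval K lamIn i j else Lval K lamOut i j)
            - x j m * (if l = m then Lval K lamIn i j else Lval K lamOut i j)
          = (if q = m then x j m * (Lval K lamIn i j - Lval K lamOut i j) else 0)
            + (if l = m then -(x j m * (Lval K lamIn i j - Lval K lamOut i j)) else 0) := by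
        intro m
        split_ifs with h1 h2 h2
        · exact absurd (h1.trans h2.symm) hql
        · ring
        · ring
        · ring
      simp only [hterm]
      rw [Finset.sum_add_distrib, Finset.sum_ite_eq, Finset.sum_ite_eq]
      simp only [Finset.mem_univ, if_true]
      ring
    have hval : Real.log (gE K α lamIn lamOut a i q * gE K α lamIn lamOut b i l /
        (gE K α lamIn lamOut b i q * gE K α lamIn lamOut a i l)) =
        ∑ j ∈ Finset.univ.erase i,
          ((b j q - a j q) - (b j l - a j l)) * (Lval K lamIn i j - Lval K lamOut i j) := by
      rw [key, show (AE K lamIn lamOut b i q - AE K lamIn lamOut a i q)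
          - (AE K lamIn lamOut b i l - AE K lamIn lamOut a i l)
        = (AE K lamIn lamOut b i q - AE K lamIn lamOut b i l)
          - (AE K lamIn lamOut a i q - AE K lamIn lamOut a i l) by ring,
        hAdiff a, hAdiff b, ← Finset.sum_sub_distrib]
      exact Finset.sum_congr rfl fun j _ => by ring
    have hDle : ∀ j ∈ Finset.univ.erase i,
        |Lval K lamIn i j - Lval K lamOut i j| ≤ M := by
      intro j hj
      have hji : j ≠ i := Finset.ne_of_mem_erase hj
      have hbij := hbound i j hji.symm
      have hmem : max (Lval K lamIn i j) (Lval K lamOut i j) ≤ M :=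
        hMub ⟨i, j, hji.symm, rfl⟩
      rw [abs_sub_le_iff]
      constructor
      · have := le_trans (le_max_left (Lval K lamIn i j) (Lval K lamOut i j)) hmem
        linarith [hbij.2.1]
      · have := le_trans (le_max_right (Lval K lamIn i j) (Lval K lamOut i j)) hmem
        linarith [hbij.1.1]
    have hbd : |∑ j ∈ Finset.univ.erase i,
        ((b j q - a j q) - (b j l - a j l)) * (Lval K lamIn i j - Lval K lamOut i j)|
        ≤ ((p:ℝ) - 1) * (2 * d * M) := by
      calc |∑ j ∈ Finset.univ.erase i,
          ((b j q - a j q) - (b j l - a j l)) * (Lval K lamIn i j - Lval K lamOut i j)|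
          ≤ ∑ j ∈ Finset.univ.erase i,
            |((b j q - a j q) - (b j l - a j l)) * (Lval K lamIn i j - Lval K lamOut i j)| :=
          Finset.abs_sum_le_sum_abs _ _
        _ ≤ ∑ _j ∈ Finset.univ.erase i, (2 * d * M) := by
            refine Finset.sum_le_sum fun j hj => ?_
            rw [abs_mul]
            have h1 : |(b j q - a j q) - (b j l - a j l)| ≤ 2 * d := by
              have := habs j q
              have := habs j l
              rw [abs_sub_le_iff] at *
              constructor <;> [skip; skip] <;>
                simp only [abs_sub_le_iff] at * <;> try linarith
            · exact mul_le_mul h1 (hDle j hj) (abs_nonneg _) (by linarith)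
        _ = ((Finset.univ.erase i).card : ℝ) * (2 * d * M) := by
            rw [Finset.sum_const, nsmul_eq_mul]
        _ = ((p:ℝ) - 1) * (2 * d * M) := by
            rw [Finset.card_erase_of_mem (Finset.mem_univ i), Finset.card_univ,
              Fintype.card_fin]
            congr 1
            have : (1:ℕ) ≤ p := by omega
            push_cast [Nat.cast_sub this]
            ring
    rw [hval]
    have hfin : ((p:ℝ) - 1) * (2 * d * M) ≤ (1 + ε⁻¹) * (2 * ((p:ℝ)-1)) * M * d := by
      have hX : 0 ≤ ((p:ℝ) - 1) * (2 * d * M) := by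
        apply mul_nonneg (by linarith)
        exact mul_nonneg (by linarith) hMpos.le
      nlinarith [hεinv, hX]
    calc _ ≤ |∑ j ∈ Finset.univ.erase i,
          ((b j q - a j q) - (b j l - a j l)) * (Lval K lamIn i j - Lval K lamOut i j)| :=
        le_abs_self _
      _ ≤ ((p:ℝ) - 1) * (2 * d * M) := hbd
      _ ≤ _ := hfin
end

section
/- Let X ~ N(0, Σ) with Σ positive definite, K = Σ⁻¹. Then the pseudo log-likelihood Σ_i Σ_k log p(X_i^k | X_{\i}^k) for an n-sample equals (n/2) Σ_i (log K_{ii} - K_{ii} S_{ii} - 2 S_{i\i} K_{i\i} - (1/K_{ii}) K_{i\i} S_{\i\i} K_{i\i}ᵀ) + c, where c does not depend on K, S is the empirical covariance matrix, and for each i, K_{i\i} (resp. S_{i\i}) denotes the i-th row of K (resp. S) with the i-th entry removed and S_{\i\i} the matrix S with i-th row and column removed. -/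
open Matrix Real

lemma sum_split' {α : Type*} [Fintype α] [DecidableEq α] (i : α) (f : α → ℝ) :
    ∑ m, f m = f i + ∑ j : {j : α // j ≠ i}, f (j : α) := by
  rw [← Finset.add_sum_erase _ f (Finset.mem_univ i)]
  congr 1
  refine Finset.sum_subtype _ (fun x => ?_) f
  simp [Finset.mem_erase]

lemma submatrix_posDef' {p : ℕ} {M : Matrix (Fin p) (Fin p) ℝ} (hM : M.PosDef) (i : Fin p) :
    (M.submatrix (fun j : {j : Fin p // j ≠ i} => (j : Fin p))
      (fun j : {j : Fin p // j ≠ i} => (j : Fin p))).PosDef := by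
  refine Matrix.PosDef.of_dotProduct_mulVec_pos (hM.1.submatrix _) (fun x hx => ?_)
  classical
  set y : Fin p → ℝ := fun m => if h : m ≠ i then x ⟨m, h⟩ else 0 with hy
  have hyi : y i = 0 := by simp [hy]
  have hyl : ∀ l : {j : Fin p // j ≠ i}, y (l : Fin p) = x l := fun l => dif_pos l.2
  have hy0 : y ≠ 0 := by
    obtain ⟨j, hj⟩ := Function.ne_iff.mp hx
    intro h
    apply hj
    have := congrFun h (j : Fin p)
    simpa [hy, j.2] using this
  have hpos := hM.dotProduct_mulVec_pos hy0
  convert hpos using 1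
  simp only [star_trivial, dotProduct, mulVec, submatrix_apply]
  rw [sum_split' i (fun m => y m * ∑ m', M m m' * y m'), hyi, zero_mul, zero_add]
  refine Finset.sum_congr rfl fun j _ => ?_
  rw [hyl]
  congr 1
  rw [sum_split' i (fun m' => M (j : Fin p) m' * y m'), hyi, mul_zero, zero_add]
  exact Finset.sum_congr rfl fun l _ => by rw [hyl]

/-- The Gaussian pseudo log-likelihood `∑ᵢ ∑ₖ log p(Xᵢᵏ | X_{\i}ᵏ)` — where the
conditional distribution of `Xᵢ` given the other coordinates is `N(μᵢᵏ, σᵢ)` with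
`μᵢᵏ = Σ_{i\i} Σ_{\i\i}⁻¹ X_{\i}ᵏ` and `σᵢ = Σᵢᵢ - Σ_{i\i} Σ_{\i\i}⁻¹ Σ_{i\i}ᵀ` —
equals `(n/2) ∑ᵢ (log Kᵢᵢ - Kᵢᵢ Sᵢᵢ - 2 S_{i\i} K_{i\i} - (1/Kᵢᵢ) K_{i\i} S_{\i\i} K_{i\i}ᵀ) + c`
with `c = -(np/2) log (2π)` not depending on `K`. -/
theorem pseudo_loglikelihood_formula {p n : ℕ} (hn : 0 < n)
    (Sig : Matrix (Fin p) (Fin p) ℝ) (hSig : Sig.PosDef)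
    (K : Matrix (Fin p) (Fin p) ℝ) (hK : K = Sig⁻¹)
    (X : Fin n → Fin p → ℝ)
    (S : Matrix (Fin p) (Fin p) ℝ)
    (hS : ∀ a b, S a b = (1 / (n : ℝ)) * ∑ k, X k a * X k b)
    (condVar : Fin p → ℝ)
    (hvar : ∀ i, condVar i =
      Sig i i -
        (fun j : {j : Fin p // j ≠ i} => Sig i (j : Fin p)) ⬝ᵥ
          ((Sig.submatrix (fun j : {j : Fin p // j ≠ i} => (j : Fin p))
              (fun j : {j : Fin p // j ≠ i} => (j : Fin p)))⁻¹).mulVec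
            (fun j : {j : Fin p // j ≠ i} => Sig (j : Fin p) i))
    (condMean : Fin p → Fin n → ℝ)
    (hmean : ∀ i k, condMean i k =
      (fun j : {j : Fin p // j ≠ i} => Sig i (j : Fin p)) ⬝ᵥ
        ((Sig.submatrix (fun j : {j : Fin p // j ≠ i} => (j : Fin p))
            (fun j : {j : Fin p // j ≠ i} => (j : Fin p)))⁻¹).mulVec
          (fun j : {j : Fin p // j ≠ i} => X k (j : Fin p))) :
    ∑ i : Fin p, ∑ k : Fin n,
        Real.log ((Real.sqrt (2 * π * condVar i))⁻¹ *
          Real.exp (-(X k i - condMean i k) ^ 2 / (2 * condVar i)))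
      = (n : ℝ) / 2 * ∑ i,
          (Real.log (K i i) - K i i * S i i
            - 2 * (∑ j : {j : Fin p // j ≠ i}, S i (j : Fin p) * K i (j : Fin p))
            - (1 / K i i) * ∑ j : {j : Fin p // j ≠ i}, ∑ l : {l : Fin p // l ≠ i},
                K i (j : Fin p) * S (j : Fin p) (l : Fin p) * K i (l : Fin p))
        + (-((n : ℝ) * p / 2) * Real.log (2 * π)) := by
  have hdet : IsUnit Sig.det := hSig.det_pos.ne'.isUnit
  have hSK : Sig * K = 1 := by rw [hK]; exact Matrix.mul_nonsing_inv _ hdet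
  have hKS : K * Sig = 1 := by rw [hK]; exact Matrix.nonsing_inv_mul _ hdet
  have hKpos : K.PosDef := by rw [hK]; exact hSig.inv
  have hKd : ∀ i, 0 < K i i := by
    intro i
    have h := hKpos.dotProduct_mulVec_pos (x := Pi.single i 1) (by
      intro h
      have := congrFun h i
      simp at this)
    simpa [dotProduct, mulVec, Pi.single_apply, Finset.sum_ite_eq', Finset.mul_sum] using h
  -- the inverse-submatrix facts
  have hAfacts : ∀ i : Fin p,
      (((Sig.submatrix (fun j : {j : Fin p // j ≠ i} => (j : Fin p))
          (fun j : {j : Fin p // j ≠ i} => (j : Fin p)))⁻¹).mulVec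
        (fun j : {j : Fin p // j ≠ i} => Sig (j : Fin p) i)
          = fun l : {j : Fin p // j ≠ i} => -K (l : Fin p) i / K i i)
      ∧ ((fun j : {j : Fin p // j ≠ i} => Sig i (j : Fin p)) ᵥ*
          (Sig.submatrix (fun j : {j : Fin p // j ≠ i} => (j : Fin p))
            (fun j : {j : Fin p // j ≠ i} => (j : Fin p)))⁻¹
          = fun l : {j : Fin p // j ≠ i} => -K i (l : Fin p) / K i i) := by
    intro i
    have hA := submatrix_posDef' hSig i
    have hAdet : IsUnit (Sig.submatrix (fun j : {j : Fin p // j ≠ i} => (j : Fin p))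
        (fun j : {j : Fin p // j ≠ i} => (j : Fin p))).det := hA.det_pos.ne'.isUnit
    have hKii := (hKd i).ne'
    constructor
    · have hw : (Sig.submatrix (fun j : {j : Fin p // j ≠ i} => (j : Fin p))
          (fun j : {j : Fin p // j ≠ i} => (j : Fin p))) *ᵥ
          (fun l : {j : Fin p // j ≠ i} => -K (l : Fin p) i / K i i)
          = fun j : {j : Fin p // j ≠ i} => Sig (j : Fin p) i := by
        funext j
        have h0 : (Sig * K) (j : Fin p) i = 0 := by
          rw [hSK]; exact Matrix.one_apply_ne j.2
        rw [Matrix.mul_apply, sum_split' i (fun m => Sig (j : Fin p) m * K m i)] at h0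
        simp only [mulVec, dotProduct, submatrix_apply]
        calc ∑ l : {l : Fin p // l ≠ i}, Sig (j : Fin p) (l : Fin p) * (-K (l : Fin p) i / K i i)
            = (∑ l : {l : Fin p // l ≠ i}, Sig (j : Fin p) (l : Fin p) * K (l : Fin p) i)
                * (-1 / K i i) := by
              rw [Finset.sum_mul]; exact Finset.sum_congr rfl fun l _ => by ring
          _ = (-(Sig (j : Fin p) i * K i i)) * (-1 / K i i) := by
              congr 1; linarith
          _ = Sig (j : Fin p) i := by field_simp
      rw [← hw, mulVec_mulVec, Matrix.nonsing_inv_mul _ hAdet, one_mulVec]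
    · have hw : (fun l : {j : Fin p // j ≠ i} => -K i (l : Fin p) / K i i) ᵥ*
          (Sig.submatrix (fun j : {j : Fin p // j ≠ i} => (j : Fin p))
            (fun j : {j : Fin p // j ≠ i} => (j : Fin p)))
          = fun j : {j : Fin p // j ≠ i} => Sig i (j : Fin p) := by
        funext j
        have h0 : (K * Sig) i (j : Fin p) = 0 := by
          rw [hKS]; exact Matrix.one_apply_ne (Ne.symm j.2)
        rw [Matrix.mul_apply, sum_split' i (fun m => K i m * Sig m (j : Fin p))] at h0
        simp only [vecMul, dotProduct, submatrix_apply]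
        calc ∑ l : {l : Fin p // l ≠ i}, (-K i (l : Fin p) / K i i) * Sig (l : Fin p) (j : Fin p)
            = (∑ l : {l : Fin p // l ≠ i}, K i (l : Fin p) * Sig (l : Fin p) (j : Fin p))
                * (-1 / K i i) := by
              rw [Finset.sum_mul]; exact Finset.sum_congr rfl fun l _ => by ring
          _ = (-(K i i * Sig i (j : Fin p))) * (-1 / K i i) := by
              congr 1; linarith
          _ = Sig i (j : Fin p) := by field_simp
      rw [← hw, vecMul_vecMul, Matrix.mul_nonsing_inv _ hAdet, vecMul_one]
  -- conditional variance is 1 / K i i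
  have hvar1 : ∀ i, condVar i = 1 / K i i := by
    intro i
    have hKii := (hKd i).ne'
    rw [hvar i, (hAfacts i).1]
    simp only [dotProduct]
    have h1 : (Sig * K) i i = 1 := by rw [hSK]; exact Matrix.one_apply_eq i
    rw [Matrix.mul_apply, sum_split' i (fun m => Sig i m * K m i)] at h1
    have hs : ∑ j : {j : Fin p // j ≠ i}, Sig i (j : Fin p) * (-K (j : Fin p) i / K i i)
        = (∑ j : {j : Fin p // j ≠ i}, Sig i (j : Fin p) * K (j : Fin p) i) * (-1 / K i i) := by
      rw [Finset.sum_mul]; exact Finset.sum_congr rfl fun l _ => by ring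
    rw [hs]
    have h2 : ∑ j : {j : Fin p // j ≠ i}, Sig i (j : Fin p) * K (j : Fin p) i
        = 1 - Sig i i * K i i := by linarith
    rw [h2]
    field_simp
    ring
  -- residual
  have hres : ∀ i k, X k i - condMean i k = (∑ m, K i m * X k m) / K i i := by
    intro i k
    have hKii := (hKd i).ne'
    rw [hmean i k, Matrix.dotProduct_mulVec, (hAfacts i).2]
    simp only [dotProduct]
    rw [sum_split' i (fun m => K i m * X k m)]
    have e : ∀ l : {l : Fin p // l ≠ i}, (-K i (l : Fin p) / K i i) * X k (l : Fin p)
        = -(K i (l : Fin p) * X k (l : Fin p) / K i i) := fun l => by ring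
    rw [Finset.sum_congr rfl fun l _ => e l, Finset.sum_neg_distrib, ← Finset.sum_div]
    field_simp
    ring
  -- per-term log formula
  have hterm : ∀ i k,
      Real.log ((Real.sqrt (2 * π * condVar i))⁻¹ *
          Real.exp (-(X k i - condMean i k) ^ 2 / (2 * condVar i)))
        = -(1/2) * Real.log (2 * π) + (1/2) * Real.log (K i i)
            - (∑ m, K i m * X k m)^2 / (2 * K i i) := by
    intro i k
    have hKii := hKd i
    have h2π : (0:ℝ) < 2 * π := by positivity
    have harg : (0:ℝ) < 2 * π * condVar i := by rw [hvar1 i]; positivity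
    have hsq : Real.sqrt (2 * π * condVar i) ≠ 0 := (Real.sqrt_pos.mpr harg).ne'
    rw [hres i k, Real.log_mul (inv_ne_zero hsq) (Real.exp_ne_zero _), Real.log_exp,
      Real.log_inv, Real.log_sqrt harg.le, hvar1 i, one_div,
      Real.log_mul h2π.ne' (inv_ne_zero hKii.ne'), Real.log_inv]
    field_simp
    ring
  -- empirical second moments
  have hSn : ∀ a b, ∑ k, X k a * X k b = (n : ℝ) * S a b := by
    intro a b
    rw [hS a b]
    field_simp
  have hSsymm : ∀ a b, S a b = S b a := by
    intro a b
    rw [hS a b, hS b a]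
    congr 1
    exact Finset.sum_congr rfl fun k _ => mul_comm _ _
  have hTsum : ∀ i, ∑ k, (∑ m, K i m * X k m)^2
      = (n : ℝ) * ∑ m, ∑ m', K i m * S m m' * K i m' := by
    intro i
    have step1 : ∀ k : Fin n, (∑ m, K i m * X k m)^2
        = ∑ m, ∑ m', (K i m * K i m') * (X k m * X k m') := by
      intro k
      rw [sq, Finset.sum_mul_sum]
      exact Finset.sum_congr rfl fun m _ => Finset.sum_congr rfl fun m' _ => by ring
    rw [Finset.sum_congr rfl fun k _ => step1 k, Finset.sum_comm]
    rw [Finset.mul_sum]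
    refine Finset.sum_congr rfl fun m _ => ?_
    rw [Finset.sum_comm, Finset.mul_sum]
    refine Finset.sum_congr rfl fun m' _ => ?_
    rw [← Finset.mul_sum, hSn m m']
    ring
  -- bracket identity: splitting the full quadratic form
  have hbr : ∀ i, Real.log (K i i) - (∑ m, ∑ m', K i m * S m m' * K i m') / K i i
      = Real.log (K i i) - K i i * S i i
          - 2 * (∑ j : {j : Fin p // j ≠ i}, S i (j : Fin p) * K i (j : Fin p))
          - (1 / K i i) * ∑ j : {j : Fin p // j ≠ i}, ∑ l : {l : Fin p // l ≠ i},
              K i (j : Fin p) * S (j : Fin p) (l : Fin p) * K i (l : Fin p) := by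
    intro i
    have hKii := (hKd i).ne'
    rw [sum_split' i (fun m => ∑ m', K i m * S m m' * K i m'),
      sum_split' i (fun m' => K i i * S i m' * K i m')]
    have inner : ∀ j : {j : Fin p // j ≠ i},
        ∑ m', K i (j : Fin p) * S (j : Fin p) m' * K i m'
          = K i (j : Fin p) * S i (j : Fin p) * K i i
            + ∑ l : {l : Fin p // l ≠ i},
                K i (j : Fin p) * S (j : Fin p) (l : Fin p) * K i (l : Fin p) := by
      intro j
      rw [sum_split' i (fun m' => K i (j : Fin p) * S (j : Fin p) m' * K i m'),
        hSsymm (j : Fin p) i]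
    rw [Finset.sum_congr rfl fun j _ => inner j, Finset.sum_add_distrib]
    have e1 : ∑ j : {j : Fin p // j ≠ i}, K i i * S i (j : Fin p) * K i (j : Fin p)
        = K i i * ∑ j : {j : Fin p // j ≠ i}, S i (j : Fin p) * K i (j : Fin p) := by
      rw [Finset.mul_sum]; exact Finset.sum_congr rfl fun j _ => by ring
    have e2 : ∑ j : {j : Fin p // j ≠ i}, K i (j : Fin p) * S i (j : Fin p) * K i i
        = K i i * ∑ j : {j : Fin p // j ≠ i}, S i (j : Fin p) * K i (j : Fin p) := by
      rw [Finset.mul_sum]; exact Finset.sum_congr rfl fun j _ => by ring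
    rw [e1, e2]
    field_simp
    ring
  -- per-row sum
  have hsum : ∀ i, ∑ k : Fin n,
      Real.log ((Real.sqrt (2 * π * condVar i))⁻¹ *
        Real.exp (-(X k i - condMean i k) ^ 2 / (2 * condVar i)))
      = (n : ℝ) / 2 *
          (Real.log (K i i) - K i i * S i i
            - 2 * (∑ j : {j : Fin p // j ≠ i}, S i (j : Fin p) * K i (j : Fin p))
            - (1 / K i i) * ∑ j : {j : Fin p // j ≠ i}, ∑ l : {l : Fin p // l ≠ i},
                K i (j : Fin p) * S (j : Fin p) (l : Fin p) * K i (l : Fin p))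
        + (n : ℝ) * (-(1/2) * Real.log (2 * π)) := by
    intro i
    have hKii := (hKd i).ne'
    rw [Finset.sum_congr rfl fun k _ => hterm i k]
    rw [Finset.sum_sub_distrib, Finset.sum_add_distrib, ← Finset.sum_div, hTsum i, ← hbr i]
    simp only [Finset.sum_const, Finset.card_univ, Fintype.card_fin, nsmul_eq_mul]
    field_simp
    ring
  rw [Finset.sum_congr rfl fun i _ => hsum i, Finset.sum_add_distrib, ← Finset.mul_sum]
  simp only [Finset.sum_const, Finset.card_univ, Fintype.card_fin, nsmul_eq_mul]
  congr 1
  ring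
end
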